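/- Suppose (S_k, I_k, D_k)_{k∈K} with S_k + I_k + D_k = 1 satisfies the steady-state equations of the SIS coinfection model with host classes: 0 = r_k(1−S_k) − β_k S_k Θ_k + γ_k(I_k+D_k), 0 = β_k S_k Θ_k − σ_k β_k I_k Θ_k − (γ_k+r_k) I_k, and 0 = σ_k β_k I_k Θ_k − (r_k+γ_k) D_k, where T_k = I_k + D_k, Θ = Q T, and Θ_k > 0 for all k. Then for every k ∈ K: S_k = 1/(1+R_k Θ_k), T_k = R_k Θ_k/(1+R_k Θ_k), I_k = T_k/(1+σ_k R_k Θ_k), and D_k = σ_k R_k Θ_k T_k/(1+σ_k R_k Θ_k). -/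

import Mathlib

open Matrix

/-- Explicit formulas for the endemic steady state of the SIS coinfection model
with host classes. -/
theorem endemic_steady_state_formulas {K : Type*} [Fintype K] [Nonempty K]
    (β r γ σ : K → ℝ) (hβ : ∀ k, 0 < β k) (hr : ∀ k, 0 < r k)
    (hγ : ∀ k, 0 < γ k) (hσ : ∀ k, 0 < σ k)
    (Q : Matrix K K ℝ) (hQ : ∀ k s, 0 ≤ Q k s)
    (R : K → ℝ) (hR : ∀ k, R k = β k / (r k + γ k))
    (S I D T Θ : K → ℝ)
    (hsum : ∀ k, S k + I k + D k = 1)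
    (hT : ∀ k, T k = I k + D k)
    (hΘ : Θ = Q.mulVec T) (hΘpos : ∀ k, 0 < Θ k)
    (heq1 : ∀ k, r k * (1 - S k) - β k * S k * Θ k + γ k * (I k + D k) = 0)
    (heq2 : ∀ k, β k * S k * Θ k - σ k * β k * I k * Θ k - (γ k + r k) * I k = 0)
    (heq3 : ∀ k, σ k * β k * I k * Θ k - (r k + γ k) * D k = 0) :
    ∀ k, S k = 1 / (1 + R k * Θ k) ∧
      T k = R k * Θ k / (1 + R k * Θ k) ∧
      I k = T k / (1 + σ k * R k * Θ k) ∧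
      D k = σ k * R k * Θ k * T k / (1 + σ k * R k * Θ k) := by
  intro k
  have hrk := hr k; have hγk := hγ k; have hβk := hβ k; have hσk := hσ k
  have hΘk := hΘpos k
  have hrγ : 0 < r k + γ k := by positivity
  have hRpos : 0 < R k := by rw [hR]; positivity
  have hden1 : 0 < 1 + R k * Θ k := by positivity
  have hden2 : 0 < 1 + σ k * R k * Θ k := by positivity
  have hS : S k = 1 - T k := by linarith [hsum k, hT k]
  have h1 : (r k + γ k) * T k = β k * S k * Θ k := by
    linear_combination heq1 k + (r k + γ k) * hT k + r k * hsum k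
  rw [hS] at h1
  have hTv : T k * (1 + R k * Θ k) = R k * Θ k := by
    rw [hR]; field_simp; linear_combination h1
  have hTval : T k = R k * Θ k / (1 + R k * Θ k) := by
    rw [eq_div_iff hden1.ne']; exact hTv
  have hSval : S k = 1 / (1 + R k * Θ k) := by
    rw [hS, hTval]; field_simp; ring
  have hI : I k * ((r k + γ k) + σ k * β k * Θ k) = (r k + γ k) * T k := by
    linear_combination heq3 k - (r k + γ k) * hT k
  have hIv : I k * (1 + σ k * R k * Θ k) = T k := by
    rw [hR]; field_simp; linear_combination hI
  have hIval : I k = T k / (1 + σ k * R k * Θ k) := by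
    rw [eq_div_iff hden2.ne']; exact hIv
  have hDval : D k = σ k * R k * Θ k * T k / (1 + σ k * R k * Θ k) := by
    have hD : D k = T k - I k := by linarith [hT k]
    rw [hD, hIval]; field_simp; ring
  exact ⟨hSval, hTval, hIval, hDval⟩
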